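/- Let I be an ideal (in our sense) on a countably infinite set X which is not dense (i.e., X ∉ Î). Then C_Î is a precomplete clone, and it is the unique precomplete clone containing C_I. Consequently, C_I is precomplete if and only if I is regular (I = Î). -/

import Mathlib

/-- The set of all finitary operations on `X`: an element of arity index `n`
is an `(n+1)`-ary operation, so that all arities are `≥ 1`. -/
abbrev Ops (X : Type) : Type := Σ n : ℕ, (Fin (n + 1) → X) → X

/-- `opImage f A` is the image `f[A^n]` of the `n`-th power of `A` under the
`n`-ary operation `f`. -/
def opImage {X : Type} (f : Ops X) (A : Set X) : Set X :=
  f.2 '' {x | ∀ i, x i ∈ A}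

/-- An ideal "in our sense": closed under subsets and finite unions, contains all
finite sets, contains at least one infinite set, and does not contain `X`. -/
def IsIdealInOurSense {X : Type} (I : Set (Set X)) : Prop :=
  (∀ A ∈ I, ∀ B ⊆ A, B ∈ I) ∧
  (∀ A ∈ I, ∀ B ∈ I, A ∪ B ∈ I) ∧
  (∀ A : Set X, A.Finite → A ∈ I) ∧
  (∃ A ∈ I, A.Infinite) ∧
  (Set.univ : Set X) ∉ I

/-- The clone `C_I` induced by a collection of sets `I`: all operations mapping
powers of `I`-sets into `I`. -/
def idealClone {X : Type} (I : Set (Set X)) : Set (Ops X) :=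
  {f | ∀ A ∈ I, opImage f A ∈ I}

/-- The unary part `C_I^{(1)}` of the clone induced by `I`. -/
def unaryPart {X : Type} (I : Set (Set X)) : Set (X → X) :=
  {f | ∀ A ∈ I, f '' A ∈ I}

/-- A clone: a set of finitary operations containing all projections and closed
under composition. -/
def IsClone {X : Type} (C : Set (Ops X)) : Prop :=
  (∀ (n : ℕ) (i : Fin (n + 1)), (⟨n, fun x => x i⟩ : Ops X) ∈ C) ∧
  ∀ (n m : ℕ) (f : (Fin (n + 1) → X) → X) (g : Fin (n + 1) → (Fin (m + 1) → X) → X),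
    (⟨n, f⟩ : Ops X) ∈ C → (∀ i, (⟨m, g i⟩ : Ops X) ∈ C) →
    (⟨m, fun x => f fun i => g i x⟩ : Ops X) ∈ C

/-- The clone generated by a set of operations. -/
def cloneGen {X : Type} (F : Set (Ops X)) : Set (Ops X) :=
  ⋂₀ {C : Set (Ops X) | IsClone C ∧ F ⊆ C}

/-- A precomplete clone: a proper clone whose only proper cover is the full clone `O`. -/
def IsPrecompleteClone {X : Type} (C : Set (Ops X)) : Prop :=
  IsClone C ∧ C ≠ Set.univ ∧
  ∀ D : Set (Ops X), IsClone D → C ⊂ D → D = Set.univ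

/-- The regularization `Î` of `I`: all sets `A` such that every infinite subset
of `A` contains an infinite member of `I`. -/
def regularization {X : Type} (I : Set (Set X)) : Set (Set X) :=
  {A | ∀ B ⊆ A, B.Infinite → ∃ C ⊆ B, C.Infinite ∧ C ∈ I}

section Helpers

variable {X : Type}

lemma reg_subset_closed {I : Set (Set X)} {A A' : Set X}
    (h : A ∈ regularization I) (hsub : A' ⊆ A) : A' ∈ regularization I :=
  fun B hB hBinf => h B (hB.trans hsub) hBinf

lemma subset_reg {I : Set (Set X)} (hI : IsIdealInOurSense I) : I ⊆ regularization I :=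
  fun A hA B hB hBinf => ⟨B, subset_rfl, hBinf, hI.1 A hA B hB⟩

lemma finite_mem_reg {I : Set (Set X)} {A : Set X} (hA : A.Finite) : A ∈ regularization I :=
  fun B hB hBinf => absurd (hA.subset hB) hBinf

lemma union_mem_reg {I : Set (Set X)} {A B : Set X}
    (hA : A ∈ regularization I) (hB : B ∈ regularization I) : A ∪ B ∈ regularization I := by
  intro S hS hSinf
  by_cases h : (S ∩ A).Infinite
  · obtain ⟨C, hC, hCinf, hCI⟩ := hA (S ∩ A) Set.inter_subset_right h
    exact ⟨C, hC.trans Set.inter_subset_left, hCinf, hCI⟩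
  · have h2 : (S ∩ B).Infinite := by
      rw [Set.not_infinite] at h
      intro h2
      have hsub : S ⊆ (S ∩ A) ∪ (S ∩ B) := by
        intro x hx
        rcases hS hx with hx' | hx'
        · exact Or.inl ⟨hx, hx'⟩
        · exact Or.inr ⟨hx, hx'⟩
      exact hSinf ((h.union h2).subset hsub)
    obtain ⟨C, hC, hCinf, hCI⟩ := hB (S ∩ B) Set.inter_subset_right h2
    exact ⟨C, hC.trans Set.inter_subset_left, hCinf, hCI⟩

lemma sUnion_mem {J : Set (Set X)}
    (hun : ∀ A ∈ J, ∀ B ∈ J, A ∪ B ∈ J) (hemp : (∅ : Set X) ∈ J)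
    {T : Set (Set X)} (hT : T.Finite) (h : ∀ A ∈ T, A ∈ J) : ⋃₀ T ∈ J := by
  revert h
  refine Set.Finite.induction_on (motive := fun T _ => (∀ A ∈ T, A ∈ J) → ⋃₀ T ∈ J) T hT ?_ ?_
  · intro _; simpa using hemp
  · intro a s _ _ ih h
    rw [Set.sUnion_insert]
    exact hun a (h a (Set.mem_insert a s)) _ (ih fun A hA => h A (Set.mem_insert_of_mem a hA))

lemma iUnion_fin_mem {J : Set (Set X)}
    (hun : ∀ A ∈ J, ∀ B ∈ J, A ∪ B ∈ J) (hemp : (∅ : Set X) ∈ J) {n : ℕ}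
    (S : Fin (n + 1) → Set X) (h : ∀ i, S i ∈ J) : (⋃ i, S i) ∈ J := by
  rw [← Set.sUnion_range]
  exact sUnion_mem hun hemp (Set.finite_range S) (by rintro A ⟨i, rfl⟩; exact h i)

lemma isClone_idealClone {J : Set (Set X)} (hsub : ∀ A ∈ J, ∀ B ⊆ A, B ∈ J)
    (hun : ∀ A ∈ J, ∀ B ∈ J, A ∪ B ∈ J) (hfin : ∀ A : Set X, A.Finite → A ∈ J) :
    IsClone (idealClone J) := by
  constructor
  · intro n i A hA
    refine hsub A hA _ ?_
    rintro y ⟨x, hx, rfl⟩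
    exact hx i
  · intro n m f g hf hg A hA
    have hA' : (⋃ i, opImage ⟨m, g i⟩ A) ∈ J :=
      iUnion_fin_mem hun (hfin ∅ Set.finite_empty) _ (fun i => hg i A hA)
    refine hsub _ (hf _ hA') _ ?_
    rintro y ⟨x, hx, rfl⟩
    exact ⟨fun i => g i x, fun i => Set.mem_iUnion.2 ⟨i, ⟨x, hx, rfl⟩⟩, rfl⟩

lemma shrink {I : Set (Set X)} (hI : IsIdealInOurSense I) {A : Set X}
    (hA : A ∈ regularization I) {n : ℕ} {B : Set X} (hB : B.Infinite)
    (t : X → Fin (n + 1) → X) (ht : ∀ b ∈ B, ∀ i, t b i ∈ A) :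
    ∃ B' ⊆ B, B'.Infinite ∧ ∃ D ∈ I, ∀ b ∈ B', ∀ i, t b i ∈ D := by
  have key : ∀ s : Finset (Fin (n + 1)),
      ∃ B' ⊆ B, B'.Infinite ∧ ∃ D ∈ I, ∀ b ∈ B', ∀ i ∈ s, t b i ∈ D := by
    intro s
    induction s using Finset.induction_on with
    | empty => exact ⟨B, subset_rfl, hB, ∅, hI.2.2.1 ∅ Set.finite_empty, by simp⟩
    | @insert j s hj ih =>
      obtain ⟨B', hB'B, hB'inf, D, hD, hDmem⟩ := ih
      by_cases hS : ((fun b => t b j) '' B').Infinite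
      · obtain ⟨C, hCS, hCinf, hCI⟩ :=
          hA _ (by rintro y ⟨b, hb, rfl⟩; exact ht b (hB'B hb) j) hS
        refine ⟨{b ∈ B' | t b j ∈ C}, fun b hb => hB'B hb.1, ?_, D ∪ C,
          hI.2.1 D hD C hCI, ?_⟩
        · intro hfin
          have hCsub : C ⊆ (fun b => t b j) '' {b ∈ B' | t b j ∈ C} := by
            intro c hc
            obtain ⟨b, hb, rfl⟩ := hCS hc
            exact ⟨b, ⟨hb, hc⟩, rfl⟩
          exact hCinf ((hfin.image _).subset hCsub)
        · intro b hb i hi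
          rcases Finset.mem_insert.1 hi with rfl | hi
          · exact Or.inr hb.2
          · exact Or.inl (hDmem b hb.1 i hi)
      · rw [Set.not_infinite] at hS
        refine ⟨B', hB'B, hB'inf, D ∪ _, hI.2.1 D hD _ (hI.2.2.1 _ hS), ?_⟩
        intro b hb i hi
        rcases Finset.mem_insert.1 hi with rfl | hi
        · exact Or.inr ⟨b, hb, rfl⟩
        · exact Or.inl (hDmem b hb i hi)
  obtain ⟨B', h1, h2, D, hD, h3⟩ := key Finset.univ
  exact ⟨B', h1, h2, D, hD, fun b hb i => h3 b hb i (Finset.mem_univ i)⟩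

lemma cI_subset_reg {I : Set (Set X)} (hI : IsIdealInOurSense I) :
    idealClone I ⊆ idealClone (regularization I) := by
  classical
  intro f hf A hA B hBsub hBinf
  have hch : ∀ b : X, ∃ x : Fin (f.1 + 1) → X,
      b ∈ opImage f A → (∀ i, x i ∈ A) ∧ f.2 x = b := by
    intro b
    by_cases hb : b ∈ opImage f A
    · obtain ⟨x, hx, hfx⟩ := hb
      exact ⟨x, fun _ => ⟨hx, hfx⟩⟩
    · exact ⟨fun _ => b, fun h => absurd h hb⟩
  choose t ht1 using hch
  obtain ⟨B', hB'B, hB'inf, D, hD, hDmem⟩ :=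
    shrink hI hA hBinf t (fun b hb i => (ht1 b (hBsub hb)).1 i)
  refine ⟨B', hB'B, hB'inf, hI.1 _ (hf D hD) B' ?_⟩
  intro b hb
  exact ⟨t b, fun i => hDmem b hb i, (ht1 b (hBsub (hB'B hb))).2⟩

end Helpers

lemma equiv_set {X : Type} [Countable X] [Infinite X] {B : Set X} (hB : B.Infinite) :
    Nonempty (X ≃ ↥B) := by
  haveI := hB.to_subtype
  exact nonempty_equiv_of_countable

lemma engine {X : Type} [Countable X] [Infinite X] {I : Set (Set X)} (hI : IsIdealInOurSense I)
    {D : Set (Ops X)} (hD : IsClone D) (hID : idealClone I ⊆ D)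
    {g : Ops X} (hgD : g ∈ D) (hg : g ∉ idealClone (regularization I)) : D = Set.univ := by
  classical
  simp only [idealClone, Set.mem_setOf_eq] at hg
  push_neg at hg
  obtain ⟨A, hA, hgA⟩ := hg
  simp only [regularization, Set.mem_setOf_eq] at hgA
  push_neg at hgA
  obtain ⟨B, hBsub, hBinf, hBavoid⟩ := hgA
  -- choose preimage tuples
  have hch : ∀ b : X, ∃ x : Fin (g.1 + 1) → X,
      b ∈ opImage g A → (∀ i, x i ∈ A) ∧ g.2 x = b := by
    intro b
    by_cases hb : b ∈ opImage g A
    · obtain ⟨x, hx, hfx⟩ := hb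
      exact ⟨x, fun _ => ⟨hx, hfx⟩⟩
    · exact ⟨fun _ => b, fun h => absurd h hb⟩
  choose t ht1 using hch
  obtain ⟨B', hB'B, hB'inf, D0, hD0, hDmem⟩ :=
    shrink hI hA hBinf t (fun b hb i => (ht1 b (hBsub hb)).1 i)
  obtain ⟨β⟩ := equiv_set hB'inf
  set u : Fin (g.1 + 1) → X → X := fun i x => t (↑(β x)) i with hu_def
  -- each u i is in idealClone I
  have hu : ∀ i, (⟨0, fun v : Fin 1 → X => u i (v 0)⟩ : Ops X) ∈ idealClone I := by
    intro i A' hA'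
    refine hI.1 D0 hD0 _ ?_
    rintro y ⟨x, _, rfl⟩
    exact hDmem _ (β (x 0)).2 i
  have hGval : ∀ x : X, g.2 (fun i => u i x) = ↑(β x) := by
    intro x
    exact (ht1 _ (hBsub (hB'B (β x).2))).2
  have hGop : (⟨0, fun v : Fin 1 → X => g.2 (fun i => u i (v 0))⟩ : Ops X) ∈ D := by
    have := hD.2 g.1 0 g.2 (fun i (v : Fin 1 → X) => u i (v 0)) hgD (fun i => hID (hu i))
    exact this
  obtain ⟨x0⟩ : Nonempty X := inferInstance
  set vmap : X → X := fun y => if h : y ∈ B' then ↑(β.symm ⟨y, h⟩) else x0 with hv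
  have hvG : ∀ x : X, vmap (g.2 fun i => u i x) = x := by
    intro x
    rw [hGval x, hv]
    simp only
    rw [dif_pos (β x).2, Subtype.coe_eta]
    exact β.symm_apply_apply x
  have hvfin : ∀ A' ∈ I, (vmap '' A').Finite := by
    intro A' hA'
    have hfinB : (A' ∩ B').Finite := by
      by_contra hf
      exact hBavoid (A' ∩ B') (Set.inter_subset_right.trans hB'B) hf
        (hI.1 A' hA' _ Set.inter_subset_left)
    have hsub2 : vmap '' A' ⊆ vmap '' (A' ∩ B') ∪ {x0} := by
      rintro y ⟨a, ha, rfl⟩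
      by_cases hb : a ∈ B'
      · exact Or.inl ⟨a, ⟨ha, hb⟩, rfl⟩
      · right
        rw [hv]
        simp only
        rw [dif_neg hb]
        rfl
    exact ((hfinB.image vmap).union (Set.finite_singleton x0)).subset hsub2
  -- all unary operations are in D
  have huna : ∀ w : X → X, (⟨0, fun v : Fin 1 → X => w (v 0)⟩ : Ops X) ∈ D := by
    intro w
    have hwv : (⟨0, fun v : Fin 1 → X => w (vmap (v 0))⟩ : Ops X) ∈ idealClone I := by
      intro A' hA'
      refine hI.2.2.1 _ ?_
      have hsub3 : opImage ⟨0, fun v : Fin 1 → X => w (vmap (v 0))⟩ A' ⊆ w '' (vmap '' A') := by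
        rintro y ⟨x, hx, rfl⟩
        exact ⟨vmap (x 0), ⟨x 0, hx 0, rfl⟩, rfl⟩
      exact ((hvfin A' hA').image w).subset hsub3
    have hcomp := hD.2 0 0 (fun v : Fin 1 → X => w (vmap (v 0)))
      (fun _ (v : Fin 1 → X) => g.2 fun i => u i (v 0)) (hID hwv) (fun _ => hGop)
    have h3 : (fun x : Fin 1 → X => w (vmap (g.2 fun i => u i (x 0)))) =
        (fun v : Fin 1 → X => w (v 0)) := by
      funext x
      rw [hvG]
    have hcomp2 : (⟨0, fun x : Fin 1 → X => w (vmap (g.2 fun i => u i (x 0)))⟩ : Ops X) ∈ D :=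
      hcomp
    rw [h3] at hcomp2
    exact hcomp2
  -- all operations are in D
  refine Set.eq_univ_of_forall ?_
  rintro ⟨m, h2⟩
  obtain ⟨A0, hA0I, hA0inf⟩ := hI.2.2.2.1
  haveI : Infinite (Fin (m + 1) → X) :=
    Infinite.of_injective (fun x _ => x) (fun a b h => congrFun h 0)
  haveI := hA0inf.to_subtype
  obtain ⟨e⟩ : Nonempty ((Fin (m + 1) → X) ≃ ↥A0) := nonempty_equiv_of_countable
  set s : (Fin (m + 1) → X) → X := fun x => ↑(e x) with hs_def
  have hs : (⟨m, s⟩ : Ops X) ∈ idealClone I := by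
    intro A' hA'
    refine hI.1 A0 hA0I _ ?_
    rintro y ⟨x, _, rfl⟩
    exact (e x).2
  set w : X → X := fun y => if h : y ∈ A0 then h2 (e.symm ⟨y, h⟩) else y with hw
  have hws : ∀ x, w (s x) = h2 x := by
    intro x
    rw [hw, hs_def]
    simp only
    rw [dif_pos (e x).2, Subtype.coe_eta, Equiv.symm_apply_apply]
  have hcomp := hD.2 0 m (fun v : Fin 1 → X => w (v 0)) (fun _ => s) (huna w) (fun _ => hID hs)
  have hcomp2 : (⟨m, fun x : Fin (m + 1) → X => w (s x)⟩ : Ops X) ∈ D := hcomp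
  have h4 : (fun x : Fin (m + 1) → X => w (s x)) = h2 := funext hws
  rw [h4] at hcomp2
  exact hcomp2

lemma reg_ne_univ {X : Type} [Countable X] [Infinite X] {I : Set (Set X)}
    (hI : IsIdealInOurSense I) (hnd : (Set.univ : Set X) ∉ regularization I) :
    idealClone (regularization I) ≠ Set.univ := by
  classical
  simp only [regularization, Set.mem_setOf_eq] at hnd
  push_neg at hnd
  obtain ⟨W, -, hWinf, hWav⟩ := hnd
  obtain ⟨A1, hA1, hA1inf⟩ := hI.2.2.2.1
  haveI := hA1inf.to_subtype
  haveI := hWinf.to_subtype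
  obtain ⟨e⟩ : Nonempty (↥A1 ≃ ↥W) := nonempty_equiv_of_countable
  set fmap : X → X := fun x => if h : x ∈ A1 then (↑(e ⟨x, h⟩) : X) else x with hf
  intro hEq
  have hmem : (⟨0, fun v : Fin 1 → X => fmap (v 0)⟩ : Ops X) ∈ idealClone (regularization I) := by
    rw [hEq]; trivial
  have h1 := hmem A1 (subset_reg hI hA1)
  have hWsub : W ⊆ opImage ⟨0, fun v : Fin 1 → X => fmap (v 0)⟩ A1 := by
    intro y hy
    refine ⟨fun _ => ↑(e.symm ⟨y, hy⟩), fun _ => (e.symm ⟨y, hy⟩).2, ?_⟩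
    simp only [hf]
    rw [dif_pos (e.symm ⟨y, hy⟩).2, Subtype.coe_eta, Equiv.apply_symm_apply]
  obtain ⟨C, hCW, hCinf, hCI⟩ := h1 W hWsub hWinf
  exact hWav C hCW hCinf hCI

lemma clone_ne {X : Type} [Countable X] [Infinite X] {I : Set (Set X)}
    (hI : IsIdealInOurSense I) (hne : I ≠ regularization I) :
    idealClone I ≠ idealClone (regularization I) := by
  classical
  obtain ⟨A, hAreg, hAI⟩ : ∃ A, A ∈ regularization I ∧ A ∉ I := by
    by_contra h
    push_neg at h
    exact hne (Set.Subset.antisymm (subset_reg hI) (fun A hA => h A hA))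
  have hAinf : A.Infinite := fun hfin => hAI (hI.2.2.1 A hfin)
  obtain ⟨A0, hA0, hA0inf⟩ := hI.2.2.2.1
  haveI := hA0inf.to_subtype
  haveI := hAinf.to_subtype
  obtain ⟨e⟩ : Nonempty (↥A0 ≃ ↥A) := nonempty_equiv_of_countable
  obtain ⟨c⟩ : Nonempty X := inferInstance
  set fmap : X → X := fun x => if h : x ∈ A0 then (↑(e ⟨x, h⟩) : X) else c with hf
  intro hEq
  have h1 : (⟨0, fun v : Fin 1 → X => fmap (v 0)⟩ : Ops X) ∈ idealClone (regularization I) := by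
    intro A' hA'
    have hsub1 : opImage ⟨0, fun v : Fin 1 → X => fmap (v 0)⟩ A' ⊆ A ∪ {c} := by
      rintro y ⟨x, _, rfl⟩
      simp only [hf]
      by_cases hb : x 0 ∈ A0
      · rw [dif_pos hb]; exact Or.inl (e ⟨x 0, hb⟩).2
      · rw [dif_neg hb]; exact Or.inr rfl
    exact reg_subset_closed
      (union_mem_reg hAreg (finite_mem_reg (Set.finite_singleton c))) hsub1
  rw [← hEq] at h1
  have h2 := h1 A0 hA0
  have h3 : A ⊆ opImage ⟨0, fun v : Fin 1 → X => fmap (v 0)⟩ A0 := by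
    intro y hy
    refine ⟨fun _ => ↑(e.symm ⟨y, hy⟩), fun _ => (e.symm ⟨y, hy⟩).2, ?_⟩
    simp only [hf]
    rw [dif_pos (e.symm ⟨y, hy⟩).2, Subtype.coe_eta, Equiv.apply_symm_apply]
  exact hAI (hI.1 _ h2 A h3)

/-- If `I` is not dense, then `C_Î` is precomplete and is the unique precomplete
clone above `C_I`; consequently `C_I` is precomplete iff `I` is regular. -/
theorem stmt10 {X : Type} [Countable X] [Infinite X]
    {I : Set (Set X)} (hI : IsIdealInOurSense I)
    (hnd : (Set.univ : Set X) ∉ regularization I) :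
    IsPrecompleteClone (idealClone (regularization I)) ∧
    (∀ C : Set (Ops X), IsPrecompleteClone C → idealClone I ⊆ C →
      C = idealClone (regularization I)) ∧
    (IsPrecompleteClone (idealClone I) ↔ I = regularization I) := by
  classical
  have hclone : IsClone (idealClone (regularization I)) :=
    isClone_idealClone (fun A hA B hB => reg_subset_closed hA hB)
      (fun A hA B hB => union_mem_reg hA hB) (fun A hA => finite_mem_reg hA)
  have hne := reg_ne_univ hI hnd
  have hpre : IsPrecompleteClone (idealClone (regularization I)) := by
    refine ⟨hclone, hne, ?_⟩
    intro D hD hss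
    obtain ⟨g, hgD, hg⟩ := Set.exists_of_ssubset hss
    exact engine hI hD ((cI_subset_reg hI).trans hss.subset) hgD hg
  have huniq : ∀ C : Set (Ops X), IsPrecompleteClone C → idealClone I ⊆ C →
      C = idealClone (regularization I) := by
    intro C hC hIC
    have h1 : C ⊆ idealClone (regularization I) := by
      by_contra h
      obtain ⟨g, hgC, hg⟩ := Set.not_subset.1 h
      exact hC.2.1 (engine hI hC.1 hIC hgC hg)
    by_cases heq : C = idealClone (regularization I)
    · exact heq
    · exact absurd (hC.2.2 _ hclone (Set.ssubset_iff_subset_ne.mpr ⟨h1, heq⟩)) hne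
  refine ⟨hpre, huniq, ?_, ?_⟩
  · intro hp
    by_contra hne2
    exact clone_ne hI hne2 (huniq _ hp subset_rfl)
  · intro h
    rw [h]
    exact hpre
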